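/- Sinai's coboundary theorem for Markov partitions: let φ be a function on the disjoint union of a countable Markov partition, Hölder with respect to the symbolic metric via the coding, and for each partition element a fix a base point y_a. Define x* = [x, y_{R(x)}] (the Smale bracket replacing the future of x by that of y_{R(x)}), and A(x) = Σ_{n≥0} (φ(f^{-n}(x*)) − φ(f^{-n}(x))). Then A is well-defined (the series converges uniformly), bounded, and the function φ* = φ + A − A∘f^{-1} satisfies: φ*(x) depends only on the past itinerary (R(f^{-i}(x)))_{i≥0} of x. -/

import Mathlib

/-- The Sinai transfer function
`A(x) = Σ_{n≥0} (φ(f^{-n}(x*)) − φ(f^{-n}(x)))`. -/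
noncomputable def sinaiA {X : Type*} (f : Equiv.Perm X) (star : X → X)
    (φ : X → ℝ) (x : X) : ℝ :=
  ∑' n : ℕ, (φ ((f ^ (-(n : ℤ))) (star x)) - φ ((f ^ (-(n : ℤ))) x))

/-- `φ* = φ + A − A∘f^{-1}`. -/
noncomputable def sinaiPhiStar {X : Type*} (f : Equiv.Perm X) (star : X → X)
    (φ : X → ℝ) (x : X) : ℝ :=
  φ x + sinaiA f star φ x - sinaiA f star φ (f.symm x)

/-- **Sinai's coboundary theorem for Markov partitions.**
`R` is the itinerary symbol map of a countable Markov partition with the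
rectangle (Smale bracket) property, `y a` is a fixed base point of the
partition element `a`, and `x* = star x = [x, y_{R(x)}]` replaces the future
of `x` by that of `y_{R(x)}`.  If `φ` is Hölder with respect to the symbolic
metric via the (injective) coding, then the series defining `A` converges,
`A` is bounded, and `φ* = φ + A − A∘f^{-1}` depends only on the past
itinerary `(R(f^{-i} x))_{i≥0}` of `x`. -/
theorem sinai_coboundary_theorem
    {X A : Type*} (f : Equiv.Perm X) (R : X → A) (y : A → X)
    (star : X → X) (φ : X → ℝ)
    (hy : ∀ a : A, R (y a) = a)
    -- the coding is injective: a point is determined by its full itinerary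
    (hcode : ∀ x z : X, (∀ i : ℤ, R ((f ^ i) x) = R ((f ^ i) z)) → x = z)
    -- the Smale bracket: `x*` has the past of `x` and the future of `y (R x)`
    (hstarPast : ∀ x : X, ∀ i : ℕ,
      R ((f ^ (-(i : ℤ))) (star x)) = R ((f ^ (-(i : ℤ))) x))
    (hstarFuture : ∀ x : X, ∀ i : ℕ,
      R ((f ^ (i : ℤ)) (star x)) = R ((f ^ (i : ℤ)) (y (R x))))
    -- weak Hölder continuity of `φ` with respect to the symbolic metric
    (C θ : ℝ) (hC : 0 ≤ C) (hθ0 : 0 < θ) (hθ1 : θ < 1)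
    (hHolder : ∀ x z : X, ∀ n : ℕ,
      (∀ i : ℤ, |i| ≤ (n : ℤ) → R ((f ^ i) x) = R ((f ^ i) z)) →
      |φ x - φ z| ≤ C * θ ^ n) :
    (∀ x : X, Summable (fun n : ℕ =>
        φ ((f ^ (-(n : ℤ))) (star x)) - φ ((f ^ (-(n : ℤ))) x))) ∧
    (∃ B : ℝ, ∀ x : X, |sinaiA f star φ x| ≤ B) ∧
    (∀ x z : X, (∀ i : ℕ, R ((f ^ (-(i : ℤ))) x) = R ((f ^ (-(i : ℤ))) z)) →
        sinaiPhiStar f star φ x = sinaiPhiStar f star φ z) := by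
  classical
  -- composition of powers
  have hcomp : ∀ (a b : ℤ) (w : X), (f ^ a) ((f ^ b) w) = (f ^ (a + b)) w := by
    intro a b w
    rw [zpow_add, Equiv.Perm.mul_apply]
  have hsymm : ∀ w : X, f.symm w = (f ^ (-1 : ℤ)) w := by
    intro w
    rw [zpow_neg_one]
    rfl
  -- the basic term estimate
  have hbound : ∀ (x : X) (n : ℕ),
      |φ ((f ^ (-(n : ℤ))) (star x)) - φ ((f ^ (-(n : ℤ))) x)| ≤ C * θ ^ n := by
    intro x n
    apply hHolder _ _ n
    intro i hi
    rw [hcomp, hcomp]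
    have hi' := abs_le.mp hi
    have hm : -(((n - i).toNat : ℤ)) = i + -(n : ℤ) := by omega
    rw [← hm]
    exact hstarPast x (n - i).toNat
  have hgeom : Summable (fun n : ℕ => C * θ ^ n) :=
    (summable_geometric_of_lt_one hθ0.le hθ1).mul_left C
  have hsum : ∀ x : X, Summable (fun n : ℕ =>
      φ ((f ^ (-(n : ℤ))) (star x)) - φ ((f ^ (-(n : ℤ))) x)) := by
    intro x
    apply Summable.of_norm_bounded hgeom
    intro n
    exact hbound x n
  refine ⟨hsum, ⟨C * (1 - θ)⁻¹, ?_⟩, ?_⟩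
  · intro x
    have habs : Summable (fun n : ℕ =>
        ‖φ ((f ^ (-(n : ℤ))) (star x)) - φ ((f ^ (-(n : ℤ))) x)‖) :=
      (hsum x).abs
    have h1 : sinaiA f star φ x =
        ∑' n : ℕ, (φ ((f ^ (-(n : ℤ))) (star x)) - φ ((f ^ (-(n : ℤ))) x)) := rfl
    rw [h1, ← Real.norm_eq_abs]
    refine (norm_tsum_le_tsum_norm habs).trans ?_
    refine le_of_le_of_eq (Summable.tsum_le_tsum (fun n => hbound x n) habs hgeom) ?_
    rw [tsum_mul_left, tsum_geometric_of_lt_one hθ0.le hθ1]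
  · intro x z hpast
    -- equal pasts give equal starred points
    have hstar_eq : ∀ u v : X,
        (∀ i : ℕ, R ((f ^ (-(i : ℤ))) u) = R ((f ^ (-(i : ℤ))) v)) →
        star u = star v := by
      intro u v hp
      have hR : R u = R v := by
        have h0 := hp 0
        simpa using h0
      apply hcode
      intro i
      rcases Int.eq_nat_or_neg i with ⟨m, rfl | rfl⟩
      · rw [hstarFuture u m, hstarFuture v m, hR]
      · rw [hstarPast u m, hstarPast v m]
        exact hp m
    have h1 : star x = star z := hstar_eq x z hpast
    have hpast' : ∀ i : ℕ,
        R ((f ^ (-(i : ℤ))) (f.symm x)) = R ((f ^ (-(i : ℤ))) (f.symm z)) := by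
      intro i
      rw [hsymm x, hsymm z, hcomp, hcomp]
      have : -(i : ℤ) + -1 = -(((i + 1 : ℕ) : ℤ)) := by push_cast; ring
      rw [this]
      exact hpast (i + 1)
    have h2 : star (f.symm x) = star (f.symm z) := hstar_eq _ _ hpast'
    -- the telescoped identity
    have key : ∀ w : X, sinaiPhiStar f star φ w =
        φ (star w) + ∑' n : ℕ,
          (φ ((f ^ (-(n : ℤ))) (f.symm (star w))) -
            φ ((f ^ (-(n : ℤ))) (star (f.symm w)))) := by
      intro w
      set g : ℕ → ℝ := fun n =>
        φ ((f ^ (-(n : ℤ))) (star w)) - φ ((f ^ (-(n : ℤ))) w) with hg_def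
      set h : ℕ → ℝ := fun n =>
        φ ((f ^ (-(n : ℤ))) (star (f.symm w))) -
          φ ((f ^ (-(n : ℤ))) (f.symm w)) with hh_def
      set u : ℕ → ℝ := fun n =>
        φ ((f ^ (-(n : ℤ))) (f.symm (star w))) -
          φ ((f ^ (-(n : ℤ))) (star (f.symm w))) with hu_def
      have hg : Summable g := hsum w
      have hh : Summable h := hsum (f.symm w)
      have hshift : ∀ (n : ℕ) (v : X),
          (f ^ (-((n + 1 : ℕ) : ℤ))) v = (f ^ (-(n : ℤ))) (f.symm v) := by
        intro n v
        rw [hsymm v, hcomp]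
        congr 1
        push_cast
        ring
      have hgu : ∀ n : ℕ, g (n + 1) = u n + h n := by
        intro n
        simp only [hg_def, hh_def, hu_def]
        rw [hshift n (star w), hshift n w]
        ring
      have hgsucc : Summable (fun n => g (n + 1)) :=
        (summable_nat_add_iff 1).mpr hg
      have hu : Summable u := by
        have : u = fun n => g (n + 1) - h n := by
          funext n
          rw [hgu n]
          ring
        rw [this]
        exact hgsucc.sub hh
      have e1 : sinaiA f star φ w = ∑' n : ℕ, g n := rfl
      have e2 : sinaiA f star φ (f.symm w) = ∑' n : ℕ, h n := rfl
      have e3 : (∑' n : ℕ, g n) = g 0 + ∑' n : ℕ, g (n + 1) :=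
        Summable.tsum_eq_zero_add hg
      have e4 : (∑' n : ℕ, g (n + 1)) = (∑' n : ℕ, u n) + ∑' n : ℕ, h n := by
        rw [← Summable.tsum_add hu hh]
        exact tsum_congr hgu
      have e5 : g 0 = φ (star w) - φ w := by
        simp [hg_def]
        rfl
      rw [sinaiPhiStar, e1, e2, e3, e4, e5]
      ring
    rw [key x, key z, h1, h2]
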